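/- Let ν ∈ Λ with (ν,e₁) = (ν,e₂) = 0, let a₁, a₂ ∈ ℤ, and set ξ := a₁e₁ + a₂e₂ + ν. Assume (ξ,ξ) = −2. If the composite map r_ζ ∘ r_ξ ∘ r_ζ : Λ⊗ℚ → Λ⊗ℚ maps Λ into Λ (i.e., r_ζ ∘ r_ξ ∘ r_ζ ∈ O(Λ)), then (ξ,ζ) ≡ 0 (mod 5). -/
import Mathlib


/-- The involution `r_γ(x) = −x + (2(x,γ)/(γ,γ))·γ` of a rational quadratic space, with
`(+1)`-eigenspace `ℚγ` and `(−1)`-eigenspace `γ^⊥`. -/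
noncomputable def reflAlong {V : Type*} [AddCommGroup V] [Module ℚ V]
    (B : V →ₗ[ℚ] V →ₗ[ℚ] ℚ) (γ : V) (x : V) : V :=
  -x + ((2 * B x γ) / B γ γ) • γ

/-- let `Λ` be a lattice (a free `ℤ`-module of finite rank, realized here
as a `ℤ`-submodule `L` of the rational quadratic space `(V,B)` on which the form is
`ℤ`-valued), let `e₁, e₂ ∈ L` with `(e₁,e₁) = (e₂,e₂) = −2`, `(e₁,e₂) = 0`, and
`ζ = e₁ + 2e₂`.  If `ξ = a₁e₁ + a₂e₂ + ν` with `ν ∈ L` orthogonal to `e₁, e₂`,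
`(ξ,ξ) = −2`, and the composite `r_ζ ∘ r_ξ ∘ r_ζ` maps `L` into `L`, then
`(ξ,ζ) ≡ 0 (mod 5)`. -/
theorem refl_conj_integral_imp_five_dvd
    (V : Type*) [AddCommGroup V] [Module ℚ V]
    (B : V →ₗ[ℚ] V →ₗ[ℚ] ℚ) (hsymm : ∀ x y : V, B x y = B y x)
    (L : Submodule ℤ V) [Module.Free ℤ (↥L)] [Module.Finite ℤ (↥L)]
    (hint : ∀ x ∈ L, ∀ y ∈ L, ∃ n : ℤ, B x y = (n : ℚ))
    (e₁ e₂ ν : V) (he₁ : e₁ ∈ L) (he₂ : e₂ ∈ L) (hν : ν ∈ L)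
    (h11 : B e₁ e₁ = -2) (h22 : B e₂ e₂ = -2) (h12 : B e₁ e₂ = 0)
    (hν1 : B ν e₁ = 0) (hν2 : B ν e₂ = 0)
    (a₁ a₂ : ℤ) (ξ ζ : V)
    (hξ : ξ = (a₁ : ℚ) • e₁ + (a₂ : ℚ) • e₂ + ν)
    (hξξ : B ξ ξ = -2)
    (hζ : ζ = e₁ + (2 : ℚ) • e₂)
    (hmap : ∀ x ∈ L, reflAlong B ζ (reflAlong B ξ (reflAlong B ζ x)) ∈ L) :
    ∃ k : ℤ, B ξ ζ = ((5 * k : ℤ) : ℚ) := by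
  have h21 : B e₂ e₁ = 0 := by rw [hsymm]; exact h12
  have h1ν : B e₁ ν = 0 := by rw [hsymm]; exact hν1
  have h2ν : B e₂ ν = 0 := by rw [hsymm]; exact hν2
  have hζζ : B ζ ζ = -10 := by
    simp [hζ, map_add, map_smul, LinearMap.add_apply, LinearMap.smul_apply,
      h11, h22, h12, h21, smul_eq_mul]
    ring
  have hξ1 : B ξ e₁ = -2 * a₁ := by
    simp [hξ, map_add, map_smul, h11, h21, hν1, smul_eq_mul]; ring
  have hξ2 : B ξ e₂ = -2 * a₂ := by
    simp [hξ, map_add, map_smul, h12, h22, hν2, smul_eq_mul]; ring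
  have h1ξ : B e₁ ξ = -2 * a₁ := by rw [hsymm]; exact hξ1
  have h2ξ : B e₂ ξ = -2 * a₂ := by rw [hsymm]; exact hξ2
  have hξζ : B ξ ζ = -2 * a₁ - 4 * a₂ := by
    simp [hζ, map_add, map_smul, LinearMap.add_apply, LinearMap.smul_apply,
      hξ1, hξ2, smul_eq_mul]; ring
  have hζξ : B ζ ξ = -2 * a₁ - 4 * a₂ := by rw [hsymm]; exact hξζ
  have h1ζ : B e₁ ζ = -2 := by
    simp [hζ, map_add, map_smul, LinearMap.add_apply, LinearMap.smul_apply,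
      h11, h12, smul_eq_mul]
  have hζ1 : B ζ e₁ = -2 := by rw [hsymm]; exact h1ζ
  obtain ⟨n, hn⟩ := hint _ (hmap e₁ he₁) e₁ he₁
  rw [reflAlong, reflAlong, reflAlong] at hn
  simp only [map_add, map_smul, map_neg, LinearMap.add_apply, LinearMap.smul_apply,
    LinearMap.neg_apply, smul_eq_mul, h11, hζζ, hξξ, hξ1, h1ξ, hξζ, hζξ, h1ζ, hζ1] at hn
  -- now hn should be a scalar equation
  have key : (25 : ℚ) * n = 50 - 10 * a₁ * (6*a₁ - 8*a₂) + 4 * (a₁ + 2*a₂) * (6*a₁ - 8*a₂) := by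
    field_simp at hn
    linarith [hn]
  have keyZ : 25 * n = 50 - 10 * a₁ * (6*a₁ - 8*a₂) + 4 * (a₁ + 2*a₂) * (6*a₁ - 8*a₂) := by
    exact_mod_cast key
  have hp : Prime (5 : ℤ) := by norm_num
  have h5 : (5 : ℤ) ∣ 4 * ((a₁ + 2*a₂) * (a₁ + 2*a₂)) :=
    ⟨5*n - 10 + 2*a₁*(6*a₁-8*a₂) - 4*(a₁+2*a₂)*(a₁-2*a₂), by linear_combination -keyZ⟩
  have h5' : (5 : ℤ) ∣ (a₁ + 2*a₂) * (a₁ + 2*a₂) := by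
    rcases (hp.dvd_mul).mp h5 with h | h
    · omega
    · exact h
  have h5'' : (5 : ℤ) ∣ a₁ + 2*a₂ := by
    rcases (hp.dvd_mul).mp h5' with h | h <;> exact h
  obtain ⟨u, hu⟩ := h5''
  refine ⟨-2*u, ?_⟩
  rw [hξζ]
  push_cast
  have : (a₁ : ℚ) + 2*a₂ = 5*u := by exact_mod_cast hu
  linarith
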